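/- Let n ≥ 2, let φ : ℝ → ℝ be concave and monotone nondecreasing, let ψ : ℝ → ℝ be convex and monotone nondecreasing, and let u_1,…,u_n, v_1,…,v_n be vectors in ℝ^d with ‖u_i‖ = ‖v_i‖ = 1 for all i. Let p̄ := (1/n) ∑_{i=1}^n ⟨u_i, v_i⟩. Then −(1/n) ∑_{i=1}^n φ(⟨u_i, v_i⟩) + (1/(n(n−1))) ∑_{i≠j} ψ(⟨u_i, v_j⟩) ≥ −φ(p̄) + ψ( ((n−2)/(2(n−1)))·p̄ − n/(2(n−1)) ). -/

import Mathlib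

open scoped RealInnerProductSpace
open Finset

theorem stmt_12 {d n : ℕ} (hn : 2 ≤ n)
    (φ ψ : ℝ → ℝ) (hφc : ConcaveOn ℝ Set.univ φ) (hφm : Monotone φ)
    (hψc : ConvexOn ℝ Set.univ ψ) (hψm : Monotone ψ)
    (u v : Fin n → EuclideanSpace ℝ (Fin d))
    (hu : ∀ i, ‖u i‖ = 1) (hv : ∀ i, ‖v i‖ = 1) :
    -φ ((1 / (n : ℝ)) * ∑ i, ⟪u i, v i⟫)
      + ψ ((((n : ℝ) - 2) / (2 * ((n : ℝ) - 1))) * ((1 / (n : ℝ)) * ∑ i, ⟪u i, v i⟫)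
            - (n : ℝ) / (2 * ((n : ℝ) - 1)))
      ≤ -(1 / (n : ℝ)) * ∑ i, φ ⟪u i, v i⟫
        + (1 / ((n : ℝ) * (n - 1))) * ∑ p ∈ univ.offDiag, ψ ⟪u p.1, v p.2⟫ := by
  set N : ℝ := (n : ℝ) with hN
  have hN2 : (2 : ℝ) ≤ N := by rw [hN]; exact_mod_cast hn
  have hNpos : (0 : ℝ) < N := by linarith
  have hN1 : (0 : ℝ) < N - 1 := by linarith
  set T : ℝ := ∑ i, ⟪u i, v i⟫ with hT
  set S : ℝ := ∑ p ∈ univ.offDiag, ⟪u p.1, v p.2⟫ with hS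
  -- Jensen for φ
  have jφ : (1 / N) * ∑ i, φ ⟪u i, v i⟫ ≤ φ ((1 / N) * T) := by
    have := hφc.le_map_sum (t := univ) (w := fun _ => 1 / N)
      (p := fun i => ⟪u i, v i⟫) (fun i _ => by positivity)
      (by simp [Finset.sum_const]; field_simp; exact hN.symm) (fun i _ => Set.mem_univ _)
    simpa [smul_eq_mul, ← Finset.mul_sum] using this
  -- Jensen for ψ
  have card_od : ((univ : Finset (Fin n)).offDiag.card : ℝ) = N * (N - 1) := by
    rw [Finset.offDiag_card]
    have : (n : ℕ) * n - n = n * (n - 1) := by rw [Nat.mul_sub, Nat.mul_one]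
    rw [Finset.card_univ, Fintype.card_fin, this]
    push_cast [Nat.cast_sub (by omega : 1 ≤ n)]
    ring
  have hNN1 : (0 : ℝ) < N * (N - 1) := by positivity
  have jψ : ψ ((1 / (N * (N - 1))) * S)
      ≤ (1 / (N * (N - 1))) * ∑ p ∈ univ.offDiag, ψ ⟪u p.1, v p.2⟫ := by
    have := hψc.map_sum_le (t := univ.offDiag) (w := fun _ => 1 / (N * (N - 1)))
      (p := fun p => ⟪u p.1, v p.2⟫) (fun i _ => by positivity)
      (by rw [Finset.sum_const, nsmul_eq_mul, card_od]; field_simp)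
      (fun i _ => Set.mem_univ _)
    simpa [smul_eq_mul, ← Finset.mul_sum] using this
  -- lower bound on S
  have hSval : S = ⟪∑ i, u i, ∑ i, v i⟫ - T := by
    have hsplit : ∑ p ∈ (univ : Finset (Fin n)) ×ˢ univ, ⟪u p.1, v p.2⟫
        = (∑ p ∈ (univ : Finset (Fin n)).diag, ⟪u p.1, v p.2⟫) + S := by
      rw [hS, ← Finset.sum_union (Finset.disjoint_diag_offDiag _),
        Finset.diag_union_offDiag]
    have hdiag : ∑ p ∈ (univ : Finset (Fin n)).diag, ⟪u p.1, v p.2⟫ = T := by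
      rw [Finset.sum_diag]
    have hprod : ∑ p ∈ (univ : Finset (Fin n)) ×ˢ univ, ⟪u p.1, v p.2⟫
        = ⟪∑ i, u i, ∑ i, v i⟫ := by
      rw [sum_inner]
      rw [Finset.sum_product]
      simp [inner_sum]
    rw [hprod, hdiag] at hsplit
    linarith
  have hnormsum : ∑ i, ‖u i - v i‖ ^ 2 = 2 * N - 2 * T := by
    have : ∀ i, ‖u i - v i‖ ^ 2 = 2 - 2 * ⟪u i, v i⟫ := by
      intro i
      rw [norm_sub_sq_real, hu i, hv i]; ring
    rw [Finset.sum_congr rfl fun i _ => this i, Finset.sum_sub_distrib,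
      ← Finset.mul_sum]
    simp [hT, hN, mul_comm]
  have hD : ‖(∑ i, u i) - ∑ i, v i‖ ^ 2 ≤ N * (2 * N - 2 * T) := by
    rw [← Finset.sum_sub_distrib]
    calc ‖∑ i, (u i - v i)‖ ^ 2 ≤ (∑ i, ‖u i - v i‖) ^ 2 :=
          pow_le_pow_left₀ (norm_nonneg _) (norm_sum_le _ _) 2
      _ ≤ (Finset.univ.card : ℝ) * ∑ i, ‖u i - v i‖ ^ 2 := by
          have := sq_sum_le_card_mul_sum_sq (s := (univ : Finset (Fin n)))
            (f := fun i => ‖u i - v i‖)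
          exact_mod_cast this
      _ = N * (2 * N - 2 * T) := by
          rw [hnormsum, Finset.card_univ, Fintype.card_fin]
  have hinner : -(‖(∑ i, u i) - ∑ i, v i‖ ^ 2) / 4 ≤ ⟪∑ i, u i, ∑ i, v i⟫ := by
    have h1 := norm_add_sq_real (∑ i, u i) (∑ i, v i)
    have h2 := norm_sub_sq_real (∑ i, u i) (∑ i, v i)
    nlinarith [sq_nonneg ‖(∑ i, u i) + ∑ i, v i‖]
  have hSlb : (N - 2) * T / 2 - N ^ 2 / 2 ≤ S := by
    rw [hSval]; nlinarith
  -- monotonicity step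
  have hargle : ((N - 2) / (2 * (N - 1))) * ((1 / N) * T) - N / (2 * (N - 1))
      ≤ (1 / (N * (N - 1))) * S := by
    have key : ((N - 2) / (2 * (N - 1))) * ((1 / N) * T) - N / (2 * (N - 1))
        = (1 / (N * (N - 1))) * ((N - 2) * T / 2 - N ^ 2 / 2) := by
      field_simp
    rw [key]
    exact mul_le_mul_of_nonneg_left hSlb (by positivity)
  have hψle : ψ (((N - 2) / (2 * (N - 1))) * ((1 / N) * T) - N / (2 * (N - 1)))
      ≤ ψ ((1 / (N * (N - 1))) * S) := hψm hargle
  linarith
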